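/- arXiv:1705.03088 — 3 statements merged into one kernel-verified Lean document; each statement's English description precedes it below -/
import Mathlib

section
/- Suppose that k^δ · max_{0 ≤ k0 < h(k)} |T_{k0,k}(n) − T*_{k0,k}(n)| → 0 in probability for some 1 < δ < 2, with h(k) = o(k). Then k^{δ−1} · max_{0 ≤ k0 < h(k)} | U_{k0,k}(n) − U*_{k0,k}(n) | → 0 in probability, where U_{k0,k}(n) = 2·|T_{k0,k}(n)^{k−k0−1} − 0.5| and U*_{k0,k}(n) = 2·|T*_{k0,k}(n)^{k−k0−1} − 0.5|. -/
open MeasureTheory ProbabilityTheory Filter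
open scoped ENNReal NNReal Topology BigOperators

noncomputable section

/-- `orderStat x j` : the `j`-th smallest among `x 0, …, x (n-1)` (1-indexed). -/
def orderStat {n : ℕ} (x : Fin n → ℝ) (j : ℕ) : ℝ :=
  ((Multiset.map x Finset.univ.val).sort (· ≤ ·)).getD (j - 1) 0

/-- The trimmed Hill estimator `ξ̂_{k0,k}(n)`. -/
def trimmedHill (n k0 k : ℕ) (x : Fin n → ℝ) : ℝ :=
  ((k0 + 1 : ℝ) / ((k : ℝ) - k0)) *
      Real.log (orderStat x (n - k0) / orderStat x (n - k)) +
    (1 / ((k : ℝ) - k0)) *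
      ∑ i ∈ Finset.Icc (k0 + 2) k,
        Real.log (orderStat x (n - i + 1) / orderStat x (n - k))

/-- `X` is an i.i.d. sample from the Pareto(σ,ξ) distribution. -/
def IIDPareto {Ω : Type*} [MeasurableSpace Ω] (P : Measure Ω) (σ ξ : ℝ) {n : ℕ}
    (X : Fin n → Ω → ℝ) : Prop :=
  iIndepFun X P ∧
    ∀ i, Measurable (X i) ∧ Measure.map (X i) P = paretoMeasure σ (1 / ξ)

def SlowlyVarying (l : ℝ → ℝ) : Prop :=
  ∀ lam > (0:ℝ), Tendsto (fun t => l (lam * t) / l t) atTop (𝓝 1)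

/-- the ratio statistic `T_{k0,k}(n)` built from the sample `x`. -/
def ratioT (n k0 k : ℕ) (x : Fin n → ℝ) : ℝ :=
  (((k : ℝ) - k0 - 1) * trimmedHill n (k0 + 1) k x) /
    (((k : ℝ) - k0) * trimmedHill n k0 k x)

/-- the statistic `U_{k0,k}(n) = 2 |T_{k0,k}(n)^{k−k0−1} − 0.5|`. -/
def statU (n k0 k : ℕ) (x : Fin n → ℝ) : ℝ :=
  2 * |ratioT n k0 k x ^ (k - k0 - 1) - 0.5|

lemma orderStat_length {n : ℕ} (x : Fin n → ℝ) :
    ((Multiset.map x Finset.univ.val).sort (· ≤ ·)).length = n := by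
  rw [Multiset.length_sort, Multiset.card_map]; simp

lemma one_le_orderStat {n : ℕ} {x : Fin n → ℝ} (hx : ∀ i, 1 ≤ x i)
    {j : ℕ} (h2 : j ≤ n) (h0 : 0 < n) : 1 ≤ orderStat x j := by
  unfold orderStat
  have hlen := orderStat_length x
  have hlt : j - 1 < ((Multiset.map x Finset.univ.val).sort (· ≤ ·)).length := by omega
  rw [List.getD_eq_getElem _ _ hlt]
  have hmem : ((Multiset.map x Finset.univ.val).sort (· ≤ ·))[j-1] ∈
      (Multiset.map x Finset.univ.val).sort (· ≤ ·) := List.getElem_mem _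
  rw [Multiset.mem_sort] at hmem
  obtain ⟨i, -, hi⟩ := Multiset.mem_map.mp hmem
  rw [← hi]; exact hx i

lemma orderStat_mono {n : ℕ} (x : Fin n → ℝ) {j j' : ℕ} (hj : j ≤ j') (h2 : j' ≤ n)
    (h0 : 0 < j) : orderStat x j ≤ orderStat x j' := by
  unfold orderStat
  have hlen := orderStat_length x
  have hlt' : j' - 1 < ((Multiset.map x Finset.univ.val).sort (· ≤ ·)).length := by omega
  have hlt : j - 1 < ((Multiset.map x Finset.univ.val).sort (· ≤ ·)).length := by omega
  rw [List.getD_eq_getElem _ _ hlt, List.getD_eq_getElem _ _ hlt']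
  rcases eq_or_lt_of_le hj with rfl | hlt2
  · exact le_refl _
  · have hs := Multiset.pairwise_sort (Multiset.map x Finset.univ.val) (· ≤ ·)
    have := List.pairwise_iff_get.mp hs ⟨j-1, hlt⟩ ⟨j'-1, hlt'⟩ (by
      simp only [Fin.mk_lt_mk]
      omega)
    simpa using this

lemma abs_pow_sub_pow' (a b M : ℝ) (m : ℕ) (ha : |a| ≤ M) (hb : |b| ≤ M) :
    |a ^ m - b ^ m| ≤ m * M ^ (m - 1) * |a - b| := by
  have hM : 0 ≤ M := le_trans (abs_nonneg a) ha
  rw [← geom_sum₂_mul a b m, abs_mul]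
  gcongr
  calc |∑ i ∈ Finset.range m, a ^ i * b ^ (m - 1 - i)|
      ≤ ∑ i ∈ Finset.range m, |a ^ i * b ^ (m - 1 - i)| := Finset.abs_sum_le_sum_abs _ _
    _ ≤ ∑ i ∈ Finset.range m, M ^ (m - 1) := by
        apply Finset.sum_le_sum
        intro i hi
        rw [Finset.mem_range] at hi
        rw [abs_mul, abs_pow, abs_pow]
        calc |a| ^ i * |b| ^ (m - 1 - i) ≤ M ^ i * M ^ (m - 1 - i) := by
              gcongr <;> first | exact abs_nonneg _ | assumption
          _ = M ^ (m - 1) := by rw [← pow_add]; congr 1; omega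
    _ = m * M ^ (m - 1) := by rw [Finset.sum_const, Finset.card_range, nsmul_eq_mul]

lemma bddAbove_biSup_range (N : ℕ) (v : ℕ → ℝ) :
    BddAbove (Set.range fun k0 => ⨆ _ : k0 ∈ Finset.range N, v k0) := by
  apply Set.Finite.bddAbove
  apply Set.Finite.subset (Set.Finite.insert 0 ((Finset.range N).finite_toSet.image v))
  rintro _ ⟨k0, rfl⟩
  by_cases h : k0 ∈ Finset.range N
  · have he : (⨆ _ : k0 ∈ Finset.range N, v k0) = v k0 := ciSup_pos h
    show (⨆ _ : k0 ∈ Finset.range N, v k0) ∈ _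
    rw [he]
    exact Set.mem_insert_of_mem _ ⟨k0, h, rfl⟩
  · have : IsEmpty (k0 ∈ Finset.range N) := ⟨h⟩
    show (⨆ _ : k0 ∈ Finset.range N, v k0) ∈ _
    rw [Real.iSup_of_isEmpty]
    exact Set.mem_insert _ _

lemma le_biSup_range {N : ℕ} (v : ℕ → ℝ) {k0 : ℕ} (h : k0 ∈ Finset.range N) :
    v k0 ≤ ⨆ k0 ∈ Finset.range N, v k0 := by
  have h1 : v k0 = ⨆ _ : k0 ∈ Finset.range N, v k0 := (ciSup_pos (f := fun _ => v k0) h).symm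
  rw [h1]
  exact le_ciSup (bddAbove_biSup_range N v) k0

lemma biSup_range_le {N : ℕ} (v : ℕ → ℝ) {B : ℝ} (hB : 0 ≤ B)
    (h : ∀ k0 ∈ Finset.range N, v k0 ≤ B) :
    (⨆ k0 ∈ Finset.range N, v k0) ≤ B := by
  apply Real.iSup_le _ hB
  intro k0
  by_cases hk : k0 ∈ Finset.range N
  · rw [ciSup_pos (f := fun _ => v k0) hk]; exact h k0 hk
  · have : IsEmpty (k0 ∈ Finset.range N) := ⟨hk⟩
    rw [Real.iSup_of_isEmpty]; exact hB

lemma biSup_range_nonneg {N : ℕ} (v : ℕ → ℝ) (h : ∀ k0, 0 ≤ v k0) :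
    0 ≤ ⨆ k0 ∈ Finset.range N, v k0 := by
  apply Real.iSup_nonneg
  intro k0
  by_cases hk : k0 ∈ Finset.range N
  · rw [ciSup_pos (f := fun _ => v k0) hk]; exact h k0
  · have : IsEmpty (k0 ∈ Finset.range N) := ⟨hk⟩
    rw [Real.iSup_of_isEmpty]

lemma ratioT_mem_Icc {n k k0 : ℕ} {x : Fin n → ℝ} (hx : ∀ i, 1 ≤ x i)
    (hk0 : k0 + 2 ≤ k) (hkn : k < n) :
    0 ≤ ratioT n k0 k x ∧ ratioT n k0 k x ≤ 1 := by
  have hn0 : 0 < n := by omega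
  set O := orderStat x with hO
  have hOpos : ∀ j, j ≤ n → 0 < O j := fun j hj =>
    lt_of_lt_of_le one_pos (one_le_orderStat hx hj hn0)
  have hO1 : ∀ j, j ≤ n → 1 ≤ O j := fun j hj => one_le_orderStat hx hj hn0
  set A := Real.log (O (n - k0) / O (n - k)) with hA
  set B := Real.log (O (n - (k0+1)) / O (n - k)) with hB
  set r := fun i => Real.log (O (n - i + 1) / O (n - k)) with hr
  have hnk : 0 < n - k := by omega
  have hr_nonneg : ∀ i ∈ Finset.Icc (k0+2) k, 0 ≤ r i := by
    intro i hi
    rw [Finset.mem_Icc] at hi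
    apply Real.log_nonneg
    rw [le_div_iff₀ (hOpos _ (by omega)), one_mul]
    exact orderStat_mono x (by omega) (by omega) hnk
  have hB_nonneg : 0 ≤ B := by
    apply Real.log_nonneg
    rw [le_div_iff₀ (hOpos _ (by omega)), one_mul]
    exact orderStat_mono x (by omega) (by omega) hnk
  have hBA : B ≤ A := by
    apply Real.log_le_log (div_pos (hOpos _ (by omega)) (hOpos _ (by omega)))
    rw [div_le_div_iff_of_pos_right (hOpos _ (by omega))]
    exact orderStat_mono x (j := n - (k0+1)) (j' := n - k0) (by omega) (by omega) (by omega)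
  -- split sum
  have hsplit : ∑ i ∈ Finset.Icc (k0+2) k, r i = B + ∑ i ∈ Finset.Icc (k0+3) k, r i := by
    have hins : Finset.Icc (k0+2) k = insert (k0+2) (Finset.Icc (k0+3) k) := by
      ext a; simp only [Finset.mem_Icc, Finset.mem_insert]; omega
    rw [hins, Finset.sum_insert (by simp only [Finset.mem_Icc]; omega)]
    have hrB : r (k0+2) = B := by
      show Real.log (O (n - (k0+2) + 1) / O (n - k)) = B
      rw [hB, show n - (k0+2) + 1 = n - (k0+1) from by omega]
    rw [hrB]
  have hc1 : ((k : ℝ) - k0 - 1) ≠ 0 := by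
    have : (k0:ℝ) + 2 ≤ k := by exact_mod_cast hk0
    linarith
  have hc0 : ((k : ℝ) - k0) ≠ 0 := by
    have : (k0:ℝ) + 2 ≤ k := by exact_mod_cast hk0
    linarith
  have key : ∀ (c a b s : ℝ), c ≠ 0 → c * (a/c * b + 1/c * s) = a*b + s := by
    intro c a b s hc
    field_simp
  have hnum : ((k : ℝ) - k0 - 1) * trimmedHill n (k0+1) k x
      = ((k0:ℝ)+2) * B + ∑ i ∈ Finset.Icc (k0+3) k, r i := by
    unfold trimmedHill
    push_cast
    have h1 : (k:ℝ) - ((k0:ℝ)+1) = (k:ℝ) - k0 - 1 := by ring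
    have h2 : (k0:ℝ) + 1 + 1 = (k0:ℝ) + 2 := by ring
    rw [h1, h2, show k0 + 1 + 2 = k0 + 3 from rfl, key _ _ _ _ hc1]
  have hden : ((k : ℝ) - k0) * trimmedHill n k0 k x
      = ((k0:ℝ)+1) * A + (B + ∑ i ∈ Finset.Icc (k0+3) k, r i) := by
    unfold trimmedHill
    rw [← hsplit, key _ _ _ _ hc0]
  have hsum_nonneg : 0 ≤ ∑ i ∈ Finset.Icc (k0+3) k, r i :=
    Finset.sum_nonneg fun i hi => hr_nonneg i (by rw [Finset.mem_Icc] at hi ⊢; omega)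
  have hnum_nonneg : 0 ≤ ((k : ℝ) - k0 - 1) * trimmedHill n (k0+1) k x := by
    rw [hnum]; positivity
  have hle : ((k : ℝ) - k0 - 1) * trimmedHill n (k0+1) k x
      ≤ ((k : ℝ) - k0) * trimmedHill n k0 k x := by
    rw [hnum, hden]
    have h1 : ((k0:ℝ)+2) * B = ((k0:ℝ)+1) * B + B := by ring
    have h2 : ((k0:ℝ)+1) * B ≤ ((k0:ℝ)+1) * A := by
      apply mul_le_mul_of_nonneg_left hBA (by positivity)
    linarith
  unfold ratioT
  constructor
  · exact div_nonneg hnum_nonneg (le_trans hnum_nonneg hle)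
  · exact div_le_one_of_le₀ hle (le_trans hnum_nonneg hle)

lemma key_bound {n k N : ℕ} {δ η : ℝ} (hδ1 : 1 ≤ δ)
    (hN : N + 2 ≤ k) (hkn : k < n) (hk1 : 1 ≤ k)
    (hη0 : 0 < η) (hη1 : η ≤ 1)
    (x y : Fin n → ℝ) (hy : ∀ i, 1 ≤ y i)
    (hG : (k:ℝ) ^ δ * (⨆ k0 ∈ Finset.range N, |ratioT n k0 k x - ratioT n k0 k y|) < η) :
    (k:ℝ) ^ (δ-1) * (⨆ k0 ∈ Finset.range N, |statU n k0 k x - statU n k0 k y|) ≤ 6 * η := by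
  have hkpos : (0:ℝ) < k := by exact_mod_cast hk1
  have hkd : (0:ℝ) < (k:ℝ) ^ δ := Real.rpow_pos_of_pos hkpos δ
  set c : ℝ := η / (k:ℝ) ^ δ with hc
  have hc0 : 0 < c := div_pos hη0 hkd
  have hsupT : (⨆ k0 ∈ Finset.range N, |ratioT n k0 k x - ratioT n k0 k y|) < c := by
    rw [hc, lt_div_iff₀ hkd, mul_comm]
    exact hG
  have hkc : (k:ℝ) * c ≤ η := by
    rw [hc, mul_div_assoc']
    rw [div_le_iff₀ hkd]
    calc (k:ℝ) * η = η * (k:ℝ) ^ (1:ℝ) := by rw [Real.rpow_one]; ring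
      _ ≤ η * (k:ℝ) ^ δ := by
          apply mul_le_mul_of_nonneg_left _ hη0.le
          exact Real.rpow_le_rpow_of_exponent_le (by exact_mod_cast hk1) hδ1
  have hkc1 : (k:ℝ) * c ≤ 1 := hkc.trans hη1
  -- bound each term of the U-sup
  have hbound : ∀ k0 ∈ Finset.range N,
      |statU n k0 k x - statU n k0 k y| ≤ 6 * ((k:ℝ) * c) := by
    intro k0 hk0
    have hk0N : k0 < N := Finset.mem_range.mp hk0
    have hk02 : k0 + 2 ≤ k := by omega
    have hTmem := ratioT_mem_Icc hy hk02 hkn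
    set a := ratioT n k0 k x with ha
    set b := ratioT n k0 k y with hb
    have hab : |a - b| ≤ c := le_of_lt (lt_of_le_of_lt
      (le_biSup_range (fun k0 => |ratioT n k0 k x - ratioT n k0 k y|) hk0) hsupT)
    have hbabs : |b| ≤ 1 := abs_le.mpr ⟨by linarith [hTmem.1], hTmem.2⟩
    have haabs : |a| ≤ 1 + c := by
      calc |a| ≤ |b| + |a - b| := by
            have := abs_sub_abs_le_abs_sub a b
            have := abs_nonneg (a-b)
            calc |a| = |b| + (|a| - |b|) := by ring
              _ ≤ |b| + |a - b| := by linarith [abs_sub_abs_le_abs_sub a b]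
        _ ≤ 1 + c := by linarith
    set m := k - k0 - 1 with hm
    have hmk : m ≤ k := by omega
    -- |a^m - b^m| ≤ m (1+c)^(m-1) |a-b|
    have hpow : |a ^ m - b ^ m| ≤ (m:ℝ) * (1+c) ^ (m-1) * |a - b| :=
      abs_pow_sub_pow' a b (1+c) m haabs (hbabs.trans (by linarith))
    have hMexp : (1+c) ^ (m-1) ≤ 3 := by
      calc (1+c) ^ (m-1) ≤ (1+c) ^ k := by
            apply pow_le_pow_right₀ (by linarith)
            omega
        _ ≤ (Real.exp c) ^ k := by
            apply pow_le_pow_left₀ (by linarith)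
            linarith [Real.add_one_le_exp c]
        _ = Real.exp ((k:ℝ) * c) := by rw [← Real.exp_nat_mul]
        _ ≤ Real.exp 1 := Real.exp_le_exp.mpr hkc1
        _ ≤ 3 := by linarith [Real.exp_one_lt_d9.le]
    have hUstep : |statU n k0 k x - statU n k0 k y| ≤ 2 * |a ^ m - b ^ m| := by
      unfold statU
      rw [← ha, ← hb, ← hm]
      have h1 : 2 * |a ^ m - 0.5| - 2 * |b ^ m - 0.5| ≤ 2 * |a ^ m - b ^ m| := by
        have := abs_sub_abs_le_abs_sub (a ^ m - 0.5) (b ^ m - 0.5)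
        have he : (a ^ m - 0.5) - (b ^ m - 0.5) = a ^ m - b ^ m := by ring
        rw [he] at this
        linarith
      have h2 : 2 * |b ^ m - 0.5| - 2 * |a ^ m - 0.5| ≤ 2 * |a ^ m - b ^ m| := by
        have := abs_sub_abs_le_abs_sub (b ^ m - 0.5) (a ^ m - 0.5)
        have he : (b ^ m - 0.5) - (a ^ m - 0.5) = -(a ^ m - b ^ m) := by ring
        rw [he, abs_neg] at this
        linarith
      rw [abs_le]
      constructor <;> linarith
    calc |statU n k0 k x - statU n k0 k y| ≤ 2 * |a ^ m - b ^ m| := hUstep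
      _ ≤ 2 * ((m:ℝ) * (1+c) ^ (m-1) * |a - b|) := by linarith
      _ ≤ 2 * ((k:ℝ) * 3 * c) := by
          have hmr : (m:ℝ) ≤ (k:ℝ) := by exact_mod_cast hmk
          have hstep : (m:ℝ) * (1+c) ^ (m-1) * |a - b| ≤ (k:ℝ) * 3 * c :=
            mul_le_mul (mul_le_mul hmr hMexp (by positivity) hkpos.le) hab
              (abs_nonneg _) (by positivity)
          linarith
      _ = 6 * ((k:ℝ) * c) := by ring
  have hsupU : (⨆ k0 ∈ Finset.range N, |statU n k0 k x - statU n k0 k y|)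
      ≤ 6 * ((k:ℝ) * c) := by
    apply biSup_range_le _ (by positivity) hbound
  have hrw : (k:ℝ) ^ (δ-1) * (6 * ((k:ℝ) * c)) = 6 * η * ((k:ℝ) ^ (δ-1) * (k:ℝ) ^ (1-δ)) := by
    rw [hc]
    rw [show (1:ℝ) - δ = 1 + (-δ) from by ring, Real.rpow_add hkpos, Real.rpow_one,
      Real.rpow_neg hkpos.le]
    field_simp
  calc (k:ℝ) ^ (δ-1) * (⨆ k0 ∈ Finset.range N, |statU n k0 k x - statU n k0 k y|)
      ≤ (k:ℝ) ^ (δ-1) * (6 * ((k:ℝ) * c)) := by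
        apply mul_le_mul_of_nonneg_left hsupU (Real.rpow_nonneg hkpos.le _)
    _ = 6 * η * ((k:ℝ) ^ (δ-1) * (k:ℝ) ^ (1-δ)) := hrw
    _ = 6 * η := by
        rw [← Real.rpow_add hkpos]
        norm_num

/-- If `k^δ max_{0≤k0<h(k)} |T_{k0,k}(n) − T*_{k0,k}(n)| → 0` in probability for some
`1 < δ < 2` with `h(k) = o(k)`, then
`k^{δ−1} max_{0≤k0<h(k)} |U_{k0,k}(n) − U*_{k0,k}(n)| → 0` in probability. -/
theorem statU_uniform_convergence
    {Ω : Type*} [MeasurableSpace Ω] (P : Measure Ω) [IsProbabilityMeasure P]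
    (ξ δ : ℝ) (hξ : 0 < ξ) (hδ1 : 1 < δ) (hδ2 : δ < 2)
    (L : ℝ → ℝ) (hL : SlowlyVarying L)
    (n k : ℕ → ℕ) (h : ℕ → ℕ)
    (hkinf : Tendsto k atTop atTop) (hninf : Tendsto n atTop atTop)
    (hkn : Tendsto (fun m => (k m : ℝ) / (n m : ℝ)) atTop (𝓝 0))
    (hkltn : ∀ m, k m < n m)
    (hh : Tendsto (fun m => (h (k m) : ℝ) / (k m : ℝ)) atTop (𝓝 0))
    (Y : ∀ m, Fin (n m) → Ω → ℝ) (hY : ∀ m, IIDPareto P 1 1 (Y m))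
    (hT : TendstoInMeasure P
      (fun m ω => (k m : ℝ) ^ δ *
        ⨆ k0 ∈ Finset.range (h (k m)),
          |ratioT (n m) k0 (k m) (fun i => (Y m i ω) ^ ξ * L (Y m i ω)) -
            ratioT (n m) k0 (k m) (fun i => (Y m i ω) ^ ξ)|)
      atTop (fun _ => 0)) :
    TendstoInMeasure P
      (fun m ω => (k m : ℝ) ^ (δ - 1) *
        ⨆ k0 ∈ Finset.range (h (k m)),
          |statU (n m) k0 (k m) (fun i => (Y m i ω) ^ ξ * L (Y m i ω)) -
            statU (n m) k0 (k m) (fun i => (Y m i ω) ^ ξ)|)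
      atTop (fun _ => 0) := by
  rw [tendstoInMeasure_iff_dist] at hT ⊢
  intro ε hε
  set η : ℝ := min 1 (ε/12) with hηdef
  have hη0 : 0 < η := lt_min one_pos (by positivity)
  have hη1 : η ≤ 1 := min_le_left _ _
  have hη6 : 6 * η < ε := by
    have h12 : η ≤ ε/12 := min_le_right _ _
    linarith
  have hTq := hT η hη0
  have hev1 : ∀ᶠ m in atTop, 2 * h (k m) < k m := by
    have h1 := hh.eventually_lt_const (show (0:ℝ) < 1/2 by norm_num)
    have h2 := hkinf.eventually_ge_atTop 4
    filter_upwards [h1, h2] with m hm1 hm2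
    have hkpos : (0:ℝ) < (k m : ℝ) := by
      have : (4:ℝ) ≤ (k m : ℝ) := by exact_mod_cast hm2
      linarith
    rw [div_lt_iff₀ hkpos] at hm1
    have : 2 * (h (k m) : ℝ) < (k m : ℝ) := by linarith
    exact_mod_cast this
  refine tendsto_of_tendsto_of_tendsto_of_le_of_le' tendsto_const_nhds hTq
    (Eventually.of_forall fun m => zero_le) ?_
  filter_upwards [hev1, hkinf.eventually_ge_atTop 4] with m hm1 hm2
  have hbad : P {ω | ¬ ∀ i, 1 ≤ Y m i ω} = 0 := by
    have hsub : {ω | ¬ ∀ i, 1 ≤ Y m i ω} ⊆ ⋃ i, {ω | Y m i ω < 1} := by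
      intro ω hω
      simp only [Set.mem_setOf_eq] at hω
      push_neg at hω
      obtain ⟨i, hi⟩ := hω
      exact Set.mem_iUnion.mpr ⟨i, hi⟩
    refine le_antisymm (le_trans (measure_mono hsub) ?_) zero_le
    refine le_trans (measure_iUnion_le _) ?_
    have h0 : ∀ i, P {ω | Y m i ω < 1} = 0 := by
      intro i
      have hmeas := ((hY m).2 i).1
      have hmap := ((hY m).2 i).2
      have hpre : {ω | Y m i ω < 1} = (Y m i) ⁻¹' (Set.Iio 1) := rfl
      rw [hpre, ← Measure.map_apply hmeas measurableSet_Iio, hmap]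
      show paretoMeasure 1 (1/1) (Set.Iio 1) = 0
      rw [paretoMeasure, withDensity_apply _ measurableSet_Iio]
      exact lintegral_paretoPDF_of_le le_rfl
    simp [h0]
  have hsubset : {ω | ε ≤ dist ((k m : ℝ) ^ (δ - 1) *
        ⨆ k0 ∈ Finset.range (h (k m)),
          |statU (n m) k0 (k m) (fun i => (Y m i ω) ^ ξ * L (Y m i ω)) -
            statU (n m) k0 (k m) (fun i => (Y m i ω) ^ ξ)|) 0}
      ⊆ {ω | η ≤ dist ((k m : ℝ) ^ δ *
        ⨆ k0 ∈ Finset.range (h (k m)),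
          |ratioT (n m) k0 (k m) (fun i => (Y m i ω) ^ ξ * L (Y m i ω)) -
            ratioT (n m) k0 (k m) (fun i => (Y m i ω) ^ ξ)|) 0}
        ∪ {ω | ¬ ∀ i, 1 ≤ Y m i ω} := by
    intro ω hω
    by_cases hall : ∀ i, 1 ≤ Y m i ω
    · left
      simp only [Set.mem_setOf_eq] at hω ⊢
      by_contra hGlt
      push_neg at hGlt
      set x : Fin (n m) → ℝ := fun i => (Y m i ω) ^ ξ * L (Y m i ω) with hxdef
      set y : Fin (n m) → ℝ := fun i => (Y m i ω) ^ ξ with hydef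
      have hy1 : ∀ i, 1 ≤ y i := fun i => Real.one_le_rpow (hall i) hξ.le
      have hGnonneg : 0 ≤ (k m : ℝ) ^ δ *
          ⨆ k0 ∈ Finset.range (h (k m)), |ratioT (n m) k0 (k m) x - ratioT (n m) k0 (k m) y| := by
        apply mul_nonneg (Real.rpow_nonneg (Nat.cast_nonneg _) _)
        exact biSup_range_nonneg _ (fun k0 => abs_nonneg _)
      rw [Real.dist_eq, sub_zero, abs_of_nonneg hGnonneg] at hGlt
      have hkey := key_bound (n := n m) (k := k m) (N := h (k m)) (δ := δ) (η := η)
        hδ1.le (by omega) (hkltn m) (by omega) hη0 hη1 x y hy1 hGlt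
      have hFnonneg : 0 ≤ (k m : ℝ) ^ (δ - 1) *
          ⨆ k0 ∈ Finset.range (h (k m)), |statU (n m) k0 (k m) x - statU (n m) k0 (k m) y| := by
        apply mul_nonneg (Real.rpow_nonneg (Nat.cast_nonneg _) _)
        exact biSup_range_nonneg _ (fun k0 => abs_nonneg _)
      rw [Real.dist_eq, sub_zero, abs_of_nonneg hFnonneg] at hω
      linarith
    · right
      exact hall
  exact le_trans (measure_mono hsubset)
    (le_trans (measure_union_le _ _) (by rw [hbad, add_zero]))

end
end

section
/- Suppose k^{δ−1} · max_{0 ≤ k0 < h(k)} |U_{k0,k}(n) − U*_{k0,k}(n)| → 0 in probability for some 1 < δ < 2, where the U*_{k0,k}(n) are i.i.d. Uniform(0,1), and suppose the search-start function satisfies f(k) = O(k^{δ−1}) with f(k) → ∞. Then under the null hypothesis of no outliers, the probability that the exponentially weighted sequential test rejects at some stage, P_{H0}( k̂_0 > 0 ) = P( U_{i,k}(n) ≥ (1−q)^{c·a^{k−i−1}} for some i ∈ {0,…,f(k)} ), converges to q as k → ∞. -/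
open MeasureTheory ProbabilityTheory Filter Asymptotics
open scoped ENNReal NNReal Topology BigOperators

noncomputable section

/-- clamp to [0,1] -/
def clamp01 (x : ℝ) : ℝ := max (min x 1) 0

lemma clamp01_nonneg (x : ℝ) : 0 ≤ clamp01 x := le_max_right _ _

lemma clamp01_le_one (x : ℝ) : clamp01 x ≤ 1 := by
  unfold clamp01
  rcases le_or_gt x 1 with h | h
  · exact max_le (min_le_right _ _) zero_le_one
  · simp [min_eq_right h.le]

lemma clamp01_of_mem {x : ℝ} (h0 : 0 ≤ x) (h1 : x ≤ 1) : clamp01 x = x := by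
  unfold clamp01
  rw [min_eq_left h1, max_eq_left h0]

lemma clamp01_lipschitz (x y : ℝ) : |clamp01 x - clamp01 y| ≤ |x - y| := by
  unfold clamp01
  calc |max (min x 1) 0 - max (min y 1) 0| ≤ |min x 1 - min y 1| :=
        abs_max_sub_max_le_abs _ _ _
    _ ≤ max |x - y| |(1:ℝ) - 1| := abs_min_sub_min_le_max _ _ _ _
    _ ≤ |x - y| := by simp

lemma prod_sub_prod_abs_le (s : Finset ℕ) (x y : ℕ → ℝ)
    (hx0 : ∀ i, 0 ≤ x i) (hx1 : ∀ i, x i ≤ 1) (hy0 : ∀ i, 0 ≤ y i) (hy1 : ∀ i, y i ≤ 1) :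
    |∏ i ∈ s, x i - ∏ i ∈ s, y i| ≤ ∑ i ∈ s, |x i - y i| := by
  classical
  induction s using Finset.induction with
  | empty => simp
  | insert j t hnot ih =>
    rw [Finset.prod_insert hnot, Finset.prod_insert hnot, Finset.sum_insert hnot]
    have hxp0 : 0 ≤ ∏ i ∈ t, x i := Finset.prod_nonneg fun i _ => hx0 i
    have hxp1 : ∏ i ∈ t, x i ≤ 1 := Finset.prod_le_one (fun i _ => hx0 i) fun i _ => hx1 i
    have key : x j * ∏ i ∈ t, x i - y j * ∏ i ∈ t, y i
        = (x j - y j) * ∏ i ∈ t, x i + y j * (∏ i ∈ t, x i - ∏ i ∈ t, y i) := by ring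
    rw [key]
    calc |(x j - y j) * ∏ i ∈ t, x i + y j * (∏ i ∈ t, x i - ∏ i ∈ t, y i)|
        ≤ |(x j - y j) * ∏ i ∈ t, x i| + |y j * (∏ i ∈ t, x i - ∏ i ∈ t, y i)| :=
          abs_add_le _ _
      _ ≤ |x j - y j| + ∑ i ∈ t, |x i - y i| := by
          rw [abs_mul, abs_mul]
          have b1 : |x j - y j| * |∏ i ∈ t, x i| ≤ |x j - y j| * 1 := by
            gcongr
            rw [abs_of_nonneg hxp0]; exact hxp1
          have b2 : |y j| * |∏ i ∈ t, x i - ∏ i ∈ t, y i|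
              ≤ 1 * (∑ i ∈ t, |x i - y i|) := by
            apply mul_le_mul
            · rw [abs_of_nonneg (hy0 j)]; exact hy1 j
            · exact ih
            · exact abs_nonneg _
            · exact zero_le_one
          calc |x j - y j| * |∏ i ∈ t, x i| + |y j| * |∏ i ∈ t, x i - ∏ i ∈ t, y i|
              ≤ |x j - y j| * 1 + 1 * (∑ i ∈ t, |x i - y i|) := add_le_add b1 b2
            _ = |x j - y j| + ∑ i ∈ t, |x i - y i| := by ring

lemma unif_cdf {Ω : Type*} [MeasurableSpace Ω] (P : Measure Ω) (X : Ω → ℝ)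
    (hX : Measurable X) (hmap : Measure.map X P = volume.restrict (Set.Ioo (0:ℝ) 1)) (s : ℝ) :
    P (X ⁻¹' Set.Iio s) = ENNReal.ofReal (clamp01 s) := by
  have h1 : P (X ⁻¹' Set.Iio s) = Measure.map X P (Set.Iio s) :=
    (Measure.map_apply hX measurableSet_Iio).symm
  rw [h1, hmap, Measure.restrict_apply measurableSet_Iio]
  have h2 : Set.Iio s ∩ Set.Ioo (0:ℝ) 1 = Set.Ioo 0 (min s 1) := by
    ext x
    simp only [Set.mem_inter_iff, Set.mem_Iio, Set.mem_Ioo, lt_min_iff]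
    tauto
  rw [h2, Real.volume_Ioo]
  unfold clamp01
  rcases le_or_gt (min s 1) 0 with h | h
  · rw [max_eq_right h]
    simp [ENNReal.ofReal_eq_zero.2 (by linarith)]
  · rw [max_eq_left h.le]
    congr 1
    ring

lemma indep_prod_Iio {Ω : Type*} [MeasurableSpace Ω] (P : Measure Ω)
    (N : ℕ) (X : ℕ → Ω → ℝ)
    (hind : iIndepFun (fun i : Fin N => X (i : ℕ)) P)
    (F : ℕ) (hF : F < N) (s : ℕ → ℝ) :
    P (⋂ i ∈ Finset.range (F + 1), X i ⁻¹' Set.Iio (s i)) =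
      ∏ i ∈ Finset.range (F + 1), P (X i ⁻¹' Set.Iio (s i)) := by
  classical
  have hlt : ∀ m ∈ Finset.range (F + 1), m < N := fun m hm => by
    have := Finset.mem_range.1 hm; omega
  set S : Finset (Fin N) := (Finset.range (F + 1)).attachFin hlt with hS
  have key := hind.measure_inter_preimage_eq_mul S
    (sets := fun j : Fin N => Set.Iio (s (j : ℕ))) (fun i _ => measurableSet_Iio)
  have hset : (⋂ j ∈ S, (X (j : ℕ)) ⁻¹' Set.Iio (s (j : ℕ)))
      = ⋂ i ∈ Finset.range (F + 1), X i ⁻¹' Set.Iio (s i) := by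
    ext ω
    simp only [Set.mem_iInter, hS, Finset.mem_attachFin, Finset.mem_range]
    constructor
    · intro hall i hi
      exact hall ⟨i, hlt i (Finset.mem_range.2 hi)⟩ hi
    · intro hall j hj
      exact hall _ hj
  have hprod : (∏ j ∈ S, P ((X (j : ℕ)) ⁻¹' Set.Iio (s (j : ℕ))))
      = ∏ i ∈ Finset.range (F + 1), P (X i ⁻¹' Set.Iio (s i)) := by
    apply Finset.prod_bij (fun (j : Fin N) _ => (j : ℕ))
    · intro j hj
      simpa [hS, Finset.mem_attachFin] using hj
    · intro j1 hj1 j2 hj2 hval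
      exact Fin.ext hval
    · intro i hi
      exact ⟨⟨i, hlt i hi⟩, by simpa [hS, Finset.mem_attachFin] using hi, rfl⟩
    · intro j hj; rfl
  rw [← hset, key, hprod]

lemma geom_ratio (a : ℝ) (ha : 1 < a) (N F : ℕ) (hF : F + 1 ≤ N) :
    (1 / ∑ j ∈ Finset.Icc 1 N, a ^ j) * (∑ i ∈ Finset.range (F + 1), a ^ (N - i)) ≤ 1 ∧
    1 - (a - 1)⁻¹ * (a⁻¹) ^ F ≤
      (1 / ∑ j ∈ Finset.Icc 1 N, a ^ j) * (∑ i ∈ Finset.range (F + 1), a ^ (N - i)) := by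
  have ha0 : (0:ℝ) < a := lt_trans one_pos ha
  set D : ℝ := ∑ j ∈ Finset.Icc 1 N, a ^ j with hD
  set T : ℝ := ∑ i ∈ Finset.range (F + 1), a ^ (N - i) with hTdef
  have hN1 : 1 ≤ N := by omega
  have hDpos : 0 < D := by
    apply Finset.sum_pos (fun j _ => pow_pos ha0 j)
    exact ⟨1, Finset.mem_Icc.2 ⟨le_refl 1, hN1⟩⟩
  have hT : T = ∑ j ∈ Finset.Ioc (N - F - 1) N, a ^ j := by
    apply Finset.sum_nbij' (i := fun i => N - i) (j := fun j => N - j)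
    · intro i hi
      simp only [Finset.mem_range] at hi
      simp only [Finset.mem_Ioc]
      omega
    · intro j hj
      simp only [Finset.mem_Ioc] at hj
      simp only [Finset.mem_range]
      omega
    · intro i hi
      simp only [Finset.mem_range] at hi
      omega
    · intro j hj
      simp only [Finset.mem_Ioc] at hj
      omega
    · intro i hi
      rfl
  set R : ℝ := ∑ j ∈ Finset.Ioc 0 (N - F - 1), a ^ j with hRdef
  have hsplit : R + T = D := by
    rw [hT, hRdef, hD, show Finset.Icc 1 N = Finset.Ioc 0 N from (Finset.Icc_add_one_left_eq_Ioc 0 N)]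
    exact Finset.sum_Ioc_consecutive _ (Nat.zero_le _) (by omega)
  have hRnonneg : 0 ≤ R := Finset.sum_nonneg fun j _ => (pow_pos ha0 j).le
  have hTnonneg : 0 ≤ T := by
    rw [hT]; exact Finset.sum_nonneg fun j _ => (pow_pos ha0 j).le
  have hDN : a ^ N ≤ D :=
    Finset.single_le_sum (f := fun j => a ^ j) (fun j _ => (pow_pos ha0 j).le)
      (Finset.mem_Icc.2 ⟨hN1, le_refl N⟩)
  have hS_eq : (1 / D) * T = T / D := by ring
  constructor
  · rw [hS_eq, div_le_one hDpos]; linarith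
  · rw [hS_eq]
    have hR : R ≤ a ^ (N - F) / (a - 1) := by
      have hsub : Finset.Ioc 0 (N - F - 1) ⊆ Finset.range (N - F) := by
        intro j hj
        simp only [Finset.mem_Ioc] at hj
        simp only [Finset.mem_range]
        omega
      have h1 : R ≤ ∑ j ∈ Finset.range (N - F), a ^ j :=
        Finset.sum_le_sum_of_subset_of_nonneg hsub fun j _ _ => (pow_pos ha0 j).le
      have h2 : ∑ j ∈ Finset.range (N - F), a ^ j = (a ^ (N - F) - 1) / (a - 1) :=
        geom_sum_eq (ne_of_gt ha) _
      have h3 : (a ^ (N - F) - 1) / (a - 1) ≤ a ^ (N - F) / (a - 1) :=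
        (div_le_div_iff_of_pos_right (by linarith)).2 (by linarith)
      linarith
    have hapow : (0:ℝ) < a ^ N := pow_pos ha0 N
    have key : 1 - T / D = R / D := by
      field_simp
      linarith
    have hgoal : R / D ≤ (a - 1)⁻¹ * (a⁻¹) ^ F := by
      have c1 : R / D ≤ (a ^ (N - F) / (a - 1)) / a ^ N :=
        div_le_div₀ (by
          apply div_nonneg (pow_pos ha0 _).le (by linarith)) hR hapow hDN
      have c2 : (a ^ (N - F) / (a - 1)) / a ^ N = (a - 1)⁻¹ * (a⁻¹) ^ F := by
        have hNsplit : a ^ N = a ^ (N - F) * a ^ F := by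
          rw [← pow_add]; congr 1; omega
        have h1 : a - 1 ≠ 0 := by linarith
        have h2 : a ^ F ≠ 0 := by positivity
        have h3 : a ^ (N - F) ≠ 0 := by positivity
        rw [hNsplit, inv_pow]
        field_simp
      linarith
    linarith

lemma le_biSup_range_s12 (g : ℕ → ℝ) (n : ℕ) {i : ℕ} (hi : i ∈ Finset.range n) :
    g i ≤ ⨆ j ∈ Finset.range n, g j := by
  have hbdd : BddAbove (Set.range fun j => ⨆ _ : j ∈ Finset.range n, g j) := by
    refine Set.Finite.bddAbove (Set.Finite.subset
      (((Finset.range n).finite_toSet.image g).insert 0) ?_)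
    rintro x ⟨j, rfl⟩
    by_cases hj : j ∈ Finset.range n
    · refine Set.mem_insert_iff.2 (Or.inr ⟨j, hj, ?_⟩)
      simp only [ciSup_pos hj]
    · refine Set.mem_insert_iff.2 (Or.inl ?_)
      have : IsEmpty (j ∈ Finset.range n) := ⟨fun hmem => hj hmem⟩
      simp only [Real.iSup_of_isEmpty]
  have h1 : g i = ⨆ _ : i ∈ Finset.range n, g i := by simp only [ciSup_pos hi]
  rw [h1]
  exact le_ciSup hbdd i


/-- Asymptotic type-I error of the exponentially weighted sequential test.  If
`k^{δ−1} max_{0≤k0<h(k)} |U_{k0,k}(n) − U*_{k0,k}(n)| → 0` in probability for some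
`1 < δ < 2`, where the `U*_{k0,k}(n)` are independent Uniform(0,1) random variables, and the
search-start function satisfies `f(k) = O(k^{δ−1})`, `f(k) → ∞`, then under the null
hypothesis the rejection probability
`P(∃ i ≤ f(k), U_{i,k}(n) ≥ (1−q)^{c a^{k−i−1}})` converges to `q`. -/
theorem seqTest_asymptotic_typeI_error
    {Ω : Type*} [MeasurableSpace Ω] (P : Measure Ω) [IsProbabilityMeasure P]
    (δ : ℝ) (hδ1 : 1 < δ) (hδ2 : δ < 2)
    (k h f : ℕ → ℕ)
    (hkinf : Tendsto k atTop atTop)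
    (hh : Tendsto (fun m => (h (k m) : ℝ) / (k m : ℝ)) atTop (𝓝 0))
    (U Ustar : ℕ → ℕ → Ω → ℝ)
    (hmeas : ∀ m i, Measurable (Ustar m i))
    (hind : ∀ m, iIndepFun
      (fun i : Fin (k m - 1) => Ustar m (i : ℕ)) P)
    (hunif : ∀ m, ∀ i < k m - 1,
      Measure.map (Ustar m i) P = volume.restrict (Set.Ioo (0:ℝ) 1))
    (hconv : TendstoInMeasure P
      (fun m ω => (k m : ℝ) ^ (δ - 1) *
        ⨆ k0 ∈ Finset.range (h (k m)), |U m k0 ω - Ustar m k0 ω|)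
      atTop (fun _ => 0))
    (hfO : (fun m => (f (k m) : ℝ)) =O[atTop] fun m => (k m : ℝ) ^ (δ - 1))
    (hfinf : Tendsto (fun m => f (k m)) atTop atTop)
    (hfh : ∀ m, f (k m) < h (k m))
    (q a : ℝ) (hq0 : 0 < q) (hq1 : q < 1) (ha : 1 < a) :
    Tendsto
      (fun m => P {ω | ∃ i ≤ f (k m),
        (1 - q) ^ ((1 / ∑ j ∈ Finset.Icc 1 (k m - 1), a ^ j) * a ^ (k m - i - 1)) ≤ U m i ω})
      atTop (𝓝 (ENNReal.ofReal q)) := by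
  classical
  have hq' : (0:ℝ) < 1 - q := by linarith
  have ha0 : (0:ℝ) < a := lt_trans one_pos ha
  obtain ⟨t, ht⟩ : ∃ t : ℕ → ℕ → ℝ, ∀ m i, t m i =
      (1 - q) ^ ((1 / ∑ j ∈ Finset.Icc 1 (k m - 1), a ^ j) * a ^ (k m - i - 1)) :=
    ⟨_, fun m i => rfl⟩
  simp only [← ht]
  -- basic facts about t
  have hc_nonneg : ∀ m, 0 ≤ 1 / ∑ j ∈ Finset.Icc 1 (k m - 1), a ^ j := by
    intro m
    apply one_div_nonneg.2
    exact Finset.sum_nonneg fun j _ => (pow_pos ha0 j).le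
  have ht0 : ∀ m i, 0 ≤ t m i := by
    intro m i
    rw [ht]
    exact Real.rpow_nonneg hq'.le _
  have ht1 : ∀ m i, t m i ≤ 1 := by
    intro m i
    rw [ht]
    exact Real.rpow_le_one hq'.le (by linarith)
      (mul_nonneg (hc_nonneg m) (pow_pos ha0 _).le)
  -- big-O constant
  obtain ⟨C, hCbd⟩ := hfO.bound
  set C' : ℝ := max C 0 with hC'
  have hC'0 : 0 ≤ C' := le_max_right _ _
  have hfbd : ∀ᶠ m in atTop, (f (k m) : ℝ) ≤ C' * (k m : ℝ) ^ (δ - 1) := by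
    filter_upwards [hCbd] with m hm
    have h1 : ‖(f (k m) : ℝ)‖ = (f (k m) : ℝ) := Real.norm_of_nonneg (Nat.cast_nonneg _)
    have h2 : ‖(k m : ℝ) ^ (δ - 1)‖ = (k m : ℝ) ^ (δ - 1) :=
      Real.norm_of_nonneg (Real.rpow_nonneg (Nat.cast_nonneg _) _)
    rw [h1, h2] at hm
    calc (f (k m) : ℝ) ≤ C * (k m : ℝ) ^ (δ - 1) := hm
      _ ≤ C' * (k m : ℝ) ^ (δ - 1) :=
        mul_le_mul_of_nonneg_right (le_max_left _ _) (Real.rpow_nonneg (Nat.cast_nonneg _) _)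
  have hk' : Tendsto (fun m => (k m : ℝ)) atTop atTop := tendsto_natCast_atTop_atTop.comp hkinf
  -- eventually f(k) + 2 ≤ k
  have hkF : ∀ᶠ m in atTop, f (k m) + 2 ≤ k m := by
    have hrp2 : Tendsto (fun m => C' * (k m : ℝ) ^ (δ - 2) + 2 * ((k m : ℝ))⁻¹) atTop (𝓝 0) := by
      have hx : Tendsto (fun x : ℝ => x ^ (δ - 2)) atTop (𝓝 0) := by
        have h0 := tendsto_rpow_neg_atTop (y := 2 - δ) (by linarith)
        have he : (fun x : ℝ => x ^ (δ - 2)) = fun x : ℝ => x ^ (-(2 - δ)) := by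
          funext x; ring_nf
        rw [he]
        exact h0
      have h1 := (hx.comp hk').const_mul C'
      have h2 := (tendsto_inv_atTop_zero.comp hk').const_mul (2:ℝ)
      have := h1.add h2
      simpa using this
    filter_upwards [hrp2.eventually_lt_const one_pos, hfbd, hk'.eventually_ge_atTop 1]
      with m h1 h2 h3
    have hkpos : (0:ℝ) < (k m : ℝ) := by linarith
    have hpow : (k m : ℝ) * (k m : ℝ) ^ (δ - 2) = (k m : ℝ) ^ (δ - 1) := by
      have hadd := Real.rpow_add hkpos 1 (δ - 2)
      rw [Real.rpow_one] at hadd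
      rw [show δ - 1 = 1 + (δ - 2) by ring, hadd]
    have hid : (k m : ℝ) * (C' * (k m : ℝ) ^ (δ - 2) + 2 * ((k m : ℝ))⁻¹)
        = C' * (k m : ℝ) ^ (δ - 1) + 2 := by
      have hinv : (k m : ℝ) * ((k m : ℝ))⁻¹ = 1 := mul_inv_cancel₀ (ne_of_gt hkpos)
      calc (k m : ℝ) * (C' * (k m : ℝ) ^ (δ - 2) + 2 * ((k m : ℝ))⁻¹)
          = C' * ((k m : ℝ) * (k m : ℝ) ^ (δ - 2)) + 2 * ((k m : ℝ) * ((k m : ℝ))⁻¹) := by ring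
        _ = C' * (k m : ℝ) ^ (δ - 1) + 2 := by rw [hpow, hinv]; ring
    have hkey : C' * (k m : ℝ) ^ (δ - 1) + 2 < (k m : ℝ) := by
      have := mul_lt_mul_of_pos_left h1 hkpos
      rw [hid, mul_one] at this
      exact this
    have hfin : ((f (k m) : ℝ)) + 2 < (k m : ℝ) := by linarith
    have : ((f (k m) + 2 : ℕ) : ℝ) < ((k m : ℕ) : ℝ) := by push_cast; linarith
    exact_mod_cast this.le
  have hrp1 : ∀ᶠ m in atTop, 1 ≤ (k m : ℝ) ^ (δ - 1) := by
    filter_upwards [hk'.eventually_ge_atTop 1] with m hm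
    exact Real.one_le_rpow hm (by linarith)
  -- convergence of the ideal rejection probability
  have hB0 : Tendsto (fun m => 1 - ∏ i ∈ Finset.range (f (k m) + 1), t m i) atTop (𝓝 q) := by
    set L := Real.log (1 - q) with hLdef
    have hSsum : ∀ m, (∏ i ∈ Finset.range (f (k m) + 1), t m i)
        = Real.exp (L * ((1 / ∑ j ∈ Finset.Icc 1 (k m - 1), a ^ j) *
            ∑ i ∈ Finset.range (f (k m) + 1), a ^ (k m - 1 - i))) := by
      intro m
      have h1 : ∀ i ∈ Finset.range (f (k m) + 1), t m i =
          Real.exp ((L * (1 / ∑ j ∈ Finset.Icc 1 (k m - 1), a ^ j)) * a ^ (k m - 1 - i)) := by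
        intro i _
        have hidx : k m - i - 1 = k m - 1 - i := by omega
        rw [ht, hidx, Real.rpow_def_of_pos hq', ← hLdef]
        congr 1
        ring
      rw [Finset.prod_congr rfl h1, ← Real.exp_sum, ← Finset.mul_sum]
      congr 1
      ring
    simp only [hSsum]
    have hS1 : Tendsto (fun m => (1 / ∑ j ∈ Finset.Icc 1 (k m - 1), a ^ j) *
        ∑ i ∈ Finset.range (f (k m) + 1), a ^ (k m - 1 - i)) atTop (𝓝 1) := by
      have hlow : Tendsto (fun m => 1 - (a - 1)⁻¹ * (a⁻¹) ^ (f (k m))) atTop (𝓝 1) := by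
        have hp : Tendsto (fun m => (a⁻¹) ^ (f (k m))) atTop (𝓝 0) :=
          (tendsto_pow_atTop_nhds_zero_of_lt_one (inv_nonneg.2 ha0.le)
            (inv_lt_one_of_one_lt₀ ha)).comp hfinf
        have hone : Tendsto (fun _ : ℕ => (1:ℝ)) atTop (𝓝 1) := tendsto_const_nhds
        have := hone.sub (hp.const_mul ((a - 1)⁻¹))
        simpa using this
      apply tendsto_of_tendsto_of_tendsto_of_le_of_le' hlow tendsto_const_nhds
      · filter_upwards [hkF] with m hm
        exact (geom_ratio a ha (k m - 1) (f (k m)) (by omega)).2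
      · filter_upwards [hkF] with m hm
        exact (geom_ratio a ha (k m - 1) (f (k m)) (by omega)).1
    have hexp : Tendsto (fun m => Real.exp (L * ((1 / ∑ j ∈ Finset.Icc 1 (k m - 1), a ^ j) *
        ∑ i ∈ Finset.range (f (k m) + 1), a ^ (k m - 1 - i)))) atTop (𝓝 (Real.exp (L * 1))) :=
      (Real.continuous_exp.tendsto _).comp (hS1.const_mul L)
    have hone : Tendsto (fun _ : ℕ => (1:ℝ)) atTop (𝓝 1) := tendsto_const_nhds
    have hfin := hone.sub hexp
    have hval : 1 - Real.exp (L * 1) = q := by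
      rw [mul_one, hLdef, Real.exp_log hq']
      ring
    rw [hval] at hfin
    exact hfin
  -- measure of the box events
  have hCval : ∀ m, f (k m) + 2 ≤ k m → ∀ s : ℕ → ℝ,
      P (⋂ i ∈ Finset.range (f (k m) + 1), Ustar m i ⁻¹' Set.Iio (s i))
        = ENNReal.ofReal (∏ i ∈ Finset.range (f (k m) + 1), clamp01 (s i)) := by
    intro m hm s
    rw [indep_prod_Iio P (k m - 1) (Ustar m) (hind m) (f (k m)) (by omega) s]
    rw [Finset.prod_congr rfl (fun i hi => unif_cdf P (Ustar m i) (hmeas m i)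
      (hunif m i (by simp only [Finset.mem_range] at hi; omega)) (s i))]
    exact (ENNReal.ofReal_prod_of_nonneg (fun i _ => clamp01_nonneg _)).symm
  -- main real-valued convergence
  have hmain : Tendsto (fun m => (P {ω | ∃ i ≤ f (k m), t m i ≤ U m i ω}).toReal)
      atTop (𝓝 q) := by
    rw [Metric.tendsto_nhds]
    intro η hη
    have hC1 : (0:ℝ) < C' + 1 := by linarith
    set r : ℝ := η / (3 * (C' + 1)) with hrdef
    have hrpos : 0 < r := by positivity
    have hEtend : Tendsto (fun m => (P {x : Ω | r ≤ dist ((k m : ℝ) ^ (δ - 1) *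
        ⨆ k0 ∈ Finset.range (h (k m)), |U m k0 x - Ustar m k0 x|) 0}).toReal)
        atTop (𝓝 0) := by
      have h0 := hconv (ENNReal.ofReal r) (ENNReal.ofReal_pos.2 hrpos)
      simp only [edist_dist, ENNReal.ofReal_le_ofReal_iff dist_nonneg] at h0
      have h1 := (ENNReal.tendsto_toReal ENNReal.zero_ne_top).comp h0
      simpa [Function.comp_def] using h1
    have hB0ev := (Metric.tendsto_nhds.1 hB0) (η / 3) (by positivity)
    have hEev := hEtend.eventually_lt_const (by positivity : (0:ℝ) < η / 3)
    filter_upwards [hB0ev, hEev, hkF, hfbd, hrp1] with m hB0m hEm hkFm hfbdm hrp1m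
    set F := f (k m) with hF
    set K := (k m : ℝ) ^ (δ - 1) with hK
    have hK0 : (0:ℝ) < K := lt_of_lt_of_le one_pos hrp1m
    set ε := r / K with hε
    have hε0 : 0 < ε := div_pos hrpos hK0
    set MS : Set Ω := {x | r ≤ dist (K *
      ⨆ k0 ∈ Finset.range (h (k m)), |U m k0 x - Ustar m k0 x|) 0} with hMS
    -- good points
    have hgood : ∀ x, x ∉ MS → ∀ i, i ≤ F → |U m i x - Ustar m i x| < ε := by
      intro x hx i hi
      have h1 : dist (K * ⨆ k0 ∈ Finset.range (h (k m)), |U m k0 x - Ustar m k0 x|) 0 < r :=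
        lt_of_not_ge hx
      rw [Real.dist_0_eq_abs] at h1
      have h2 : K * (⨆ k0 ∈ Finset.range (h (k m)), |U m k0 x - Ustar m k0 x|) < r :=
        lt_of_le_of_lt (le_abs_self _) h1
      have h3 : (⨆ k0 ∈ Finset.range (h (k m)), |U m k0 x - Ustar m k0 x|) < ε := by
        rw [hε, lt_div_iff₀ hK0, mul_comm]
        exact h2
      exact lt_of_le_of_lt (le_biSup_range_s12 (fun j => |U m j x - Ustar m j x|) (h (k m))
        (Finset.mem_range.2 (lt_of_le_of_lt hi (hfh m)))) h3
    -- subset relations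
    have hsub1 : {ω | ∃ i ≤ F, t m i ≤ U m i ω} ⊆
        (⋂ i ∈ Finset.range (F + 1), Ustar m i ⁻¹' Set.Iio (t m i - ε))ᶜ ∪ MS := by
      intro ω hω
      by_cases hb : ω ∈ MS
      · exact Or.inr hb
      · left
        obtain ⟨i, hi, hti⟩ := hω
        simp only [Set.mem_compl_iff]
        intro hmem
        simp only [Set.mem_iInter, Set.mem_preimage, Set.mem_Iio, Finset.mem_range] at hmem
        have h1 := hmem i (by omega)
        have h2 := hgood ω hb i hi
        have h3 : U m i ω - Ustar m i ω ≤ |U m i ω - Ustar m i ω| := le_abs_self _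
        linarith
    have hsub2 : (⋂ i ∈ Finset.range (F + 1), Ustar m i ⁻¹' Set.Iio (t m i + ε))ᶜ ⊆
        {ω | ∃ i ≤ F, t m i ≤ U m i ω} ∪ MS := by
      intro ω hω
      by_cases hb : ω ∈ MS
      · exact Or.inr hb
      · left
        simp only [Set.mem_compl_iff, Set.mem_iInter, Set.mem_preimage, Set.mem_Iio,
          Finset.mem_range, not_forall] at hω
        obtain ⟨i, hilt, hige⟩ := hω
        have hige' : t m i + ε ≤ Ustar m i ω := le_of_not_gt hige
        have hile : i ≤ F := by omega
        have h2 := hgood ω hb i hile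
        have h3 : Ustar m i ω - U m i ω ≤ |U m i ω - Ustar m i ω| := by
          rw [abs_sub_comm]
          exact le_abs_self _
        exact ⟨i, hile, by linarith⟩
    -- measurability
    have hCsetmeas : ∀ s : ℕ → ℝ,
        MeasurableSet (⋂ i ∈ Finset.range (F + 1), Ustar m i ⁻¹' Set.Iio (s i)) :=
      fun s => Finset.measurableSet_biInter _ fun i _ => (hmeas m i) measurableSet_Iio
    -- measure bounds
    have hm1 : P {ω | ∃ i ≤ F, t m i ≤ U m i ω} ≤
        P ((⋂ i ∈ Finset.range (F + 1), Ustar m i ⁻¹' Set.Iio (t m i - ε))ᶜ) + P MS :=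
      le_trans (measure_mono hsub1) (measure_union_le _ _)
    have hm2 : P ((⋂ i ∈ Finset.range (F + 1), Ustar m i ⁻¹' Set.Iio (t m i + ε))ᶜ) ≤
        P {ω | ∃ i ≤ F, t m i ≤ U m i ω} + P MS :=
      le_trans (measure_mono hsub2) (measure_union_le _ _)
    -- real products
    set Pm : ℝ := ∏ i ∈ Finset.range (F + 1), clamp01 (t m i - ε) with hPm
    set Pp : ℝ := ∏ i ∈ Finset.range (F + 1), clamp01 (t m i + ε) with hPp
    set P0 : ℝ := ∏ i ∈ Finset.range (F + 1), t m i with hP0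
    have hPm0 : 0 ≤ Pm := Finset.prod_nonneg fun i _ => clamp01_nonneg _
    have hPm1 : Pm ≤ 1 := Finset.prod_le_one (fun i _ => clamp01_nonneg _)
      fun i _ => clamp01_le_one _
    have hPp0 : 0 ≤ Pp := Finset.prod_nonneg fun i _ => clamp01_nonneg _
    have hPp1 : Pp ≤ 1 := Finset.prod_le_one (fun i _ => clamp01_nonneg _)
      fun i _ => clamp01_le_one _
    -- toReal of complements
    have htom : (P ((⋂ i ∈ Finset.range (F + 1), Ustar m i ⁻¹' Set.Iio (t m i - ε))ᶜ)).toReal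
        = 1 - Pm := by
      rw [measure_compl (hCsetmeas _) (measure_ne_top P _), measure_univ,
        hCval m hkFm (fun i => t m i - ε),
        ENNReal.toReal_sub_of_le (ENNReal.ofReal_le_one.2 hPm1) ENNReal.one_ne_top,
        ENNReal.toReal_ofReal hPm0, ENNReal.toReal_one]
    have htop : (P ((⋂ i ∈ Finset.range (F + 1), Ustar m i ⁻¹' Set.Iio (t m i + ε))ᶜ)).toReal
        = 1 - Pp := by
      rw [measure_compl (hCsetmeas _) (measure_ne_top P _), measure_univ,
        hCval m hkFm (fun i => t m i + ε),
        ENNReal.toReal_sub_of_le (ENNReal.ofReal_le_one.2 hPp1) ENNReal.one_ne_top,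
        ENNReal.toReal_ofReal hPp0, ENNReal.toReal_one]
    -- real inequalities
    have h1r : (P {ω | ∃ i ≤ F, t m i ≤ U m i ω}).toReal ≤ (1 - Pm) + (P MS).toReal := by
      have hfin : P ((⋂ i ∈ Finset.range (F + 1), Ustar m i ⁻¹' Set.Iio (t m i - ε))ᶜ)
          + P MS ≠ ⊤ :=
        ENNReal.add_ne_top.2 ⟨measure_ne_top P _, measure_ne_top P _⟩
      have := ENNReal.toReal_mono hfin hm1
      rw [ENNReal.toReal_add (measure_ne_top P _) (measure_ne_top P _), htom] at this
      exact this
    have h2r : (1 - Pp) - (P MS).toReal ≤ (P {ω | ∃ i ≤ F, t m i ≤ U m i ω}).toReal := by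
      have hfin : P {ω | ∃ i ≤ F, t m i ≤ U m i ω} + P MS ≠ ⊤ :=
        ENNReal.add_ne_top.2 ⟨measure_ne_top P _, measure_ne_top P _⟩
      have := ENNReal.toReal_mono hfin hm2
      rw [ENNReal.toReal_add (measure_ne_top P _) (measure_ne_top P _), htop] at this
      linarith
    -- product comparison
    have hP0clamp : P0 = ∏ i ∈ Finset.range (F + 1), clamp01 (t m i) :=
      Finset.prod_congr rfl fun i _ => (clamp01_of_mem (ht0 m i) (ht1 m i)).symm
    have hsumbound : ∀ s' : ℕ → ℝ, (∀ i, |s' i - t m i| ≤ ε) →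
        |(∏ i ∈ Finset.range (F + 1), clamp01 (s' i)) - P0| ≤ ((F : ℝ) + 1) * ε := by
      intro s' hs'
      rw [hP0clamp]
      calc |(∏ i ∈ Finset.range (F + 1), clamp01 (s' i)) -
            ∏ i ∈ Finset.range (F + 1), clamp01 (t m i)|
          ≤ ∑ i ∈ Finset.range (F + 1), |clamp01 (s' i) - clamp01 (t m i)| :=
            prod_sub_prod_abs_le _ _ _ (fun i => clamp01_nonneg _) (fun i => clamp01_le_one _)
              (fun i => clamp01_nonneg _) (fun i => clamp01_le_one _)
        _ ≤ ∑ _i ∈ Finset.range (F + 1), ε :=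
            Finset.sum_le_sum fun i _ => le_trans (clamp01_lipschitz _ _) (hs' i)
        _ = ((F : ℝ) + 1) * ε := by
            rw [Finset.sum_const, Finset.card_range, nsmul_eq_mul]
            push_cast
            ring
    have hd1 : |Pm - P0| ≤ ((F : ℝ) + 1) * ε := by
      apply hsumbound
      intro i
      simp [abs_of_nonneg hε0.le, abs_of_nonpos, sub_sub_cancel_left]
    have hd2 : |Pp - P0| ≤ ((F : ℝ) + 1) * ε := by
      apply hsumbound
      intro i
      simp [abs_of_nonneg hε0.le, add_sub_cancel_left]
    -- the (F+1)ε bound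
    have hFε : ((F : ℝ) + 1) * ε ≤ η / 3 := by
      have h1 : ((F : ℝ) + 1) ≤ (C' + 1) * K := by
        calc (F : ℝ) + 1 ≤ C' * K + 1 := by linarith [hfbdm]
          _ ≤ C' * K + K := by linarith [hrp1m]
          _ = (C' + 1) * K := by ring
      calc ((F : ℝ) + 1) * ε ≤ ((C' + 1) * K) * ε :=
            mul_le_mul_of_nonneg_right h1 hε0.le
        _ = (C' + 1) * r := by
            rw [hε]
            field_simp
        _ = η / 3 := by
            have hne : C' + 1 ≠ 0 := ne_of_gt hC1
            rw [hrdef]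
            field_simp
    -- conclude
    rw [Real.dist_eq] at hB0m ⊢
    have hEm' : (P MS).toReal < η / 3 := hEm
    have hE0 : 0 ≤ (P MS).toReal := ENNReal.toReal_nonneg
    have habs1 := abs_le.1 hd1
    have habs2 := abs_le.1 hd2
    have habs3 := abs_lt.1 hB0m
    rw [abs_lt]
    constructor
    · linarith
    · linarith
  -- lift back to ENNReal
  have heq : (fun m => P {ω | ∃ i ≤ f (k m), t m i ≤ U m i ω})
      = fun m => ENNReal.ofReal ((P {ω | ∃ i ≤ f (k m), t m i ≤ U m i ω}).toReal) :=
    funext fun m => (ENNReal.ofReal_toReal (measure_ne_top P _)).symm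
  rw [heq]
  exact ENNReal.tendsto_ofReal hmain

end
end

section
/- Let Γ_i = E_1 + … + E_i where E_1, E_2, … are i.i.d. standard exponential random variables. Then for every ρ > 0, (1/m)·Σ_{i=1}^{m} (Γ_{i+1}/Γ_{m+1})^{ρ} → 1/(1+ρ) almost surely as m → ∞; equivalently, sup_{m ≥ M} | (1/m)·Σ_{i=1}^{m} (Γ_{i+1}/Γ_{m+1})^{ρ} − 1/(1+ρ) | → 0 almost surely as M → ∞. -/
open MeasureTheory ProbabilityTheory Filter
open scoped ENNReal NNReal Topology BigOperators

noncomputable section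

/-- i.i.d. standard exponential sequence. -/
def IIDStdExp {Ω : Type*} [MeasurableSpace Ω] (P : Measure Ω) (E : ℕ → Ω → ℝ) : Prop :=
  iIndepFun E P ∧
    ∀ i, Measurable (E i) ∧ Measure.map (E i) P = expMeasure 1

/-- partial sums `Γ_j = E_1 + … + E_j`. -/
def gammaSum {Ω : Type*} (E : ℕ → Ω → ℝ) (j : ℕ) (ω : Ω) : ℝ :=
  ∑ i ∈ Finset.range j, E i ω

open Set Real

lemma riemann_rpow {ρ : ℝ} (hρ : 0 < ρ) :
    Tendsto (fun n : ℕ => (1 / (n : ℝ)) * ∑ j ∈ Finset.range n, ((j : ℝ) / n) ^ ρ)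
      atTop (𝓝 (1 / (1 + ρ))) := by
  have hρ1 : (0:ℝ) < ρ + 1 := by linarith
  have h1ρ : (0:ℝ) < 1 + ρ := by linarith
  have key : ∀ n : ℕ, 1 ≤ n →
      1 / (1 + ρ) - 1 / (n : ℝ) ≤ (1 / (n : ℝ)) * ∑ j ∈ Finset.range n, ((j : ℝ) / n) ^ ρ ∧
      (1 / (n : ℝ)) * ∑ j ∈ Finset.range n, ((j : ℝ) / n) ^ ρ ≤ 1 / (1 + ρ) := by
    intro n hn
    have hN : (0:ℝ) < n := by exact_mod_cast hn
    have hmono : MonotoneOn (fun x : ℝ => x ^ ρ) (Set.Icc (0:ℝ) (0 + n)) := by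
      intro x hx y hy hxy
      exact Real.rpow_le_rpow hx.1 hxy hρ.le
    have hint : ∫ x in (0:ℝ)..(0 + (n:ℕ)), x ^ ρ = (n:ℝ) ^ (ρ + 1) / (ρ + 1) := by
      rw [zero_add, integral_rpow (Or.inl (by linarith))]
      rw [Real.zero_rpow (by positivity), sub_zero]
    have hupper : ∑ i ∈ Finset.range n, ((i:ℕ):ℝ) ^ ρ ≤ (n:ℝ) ^ (ρ + 1) / (ρ + 1) := by
      have := hmono.sum_le_integral
      rw [hint] at this
      simpa using this
    have h2' : (n:ℝ)^(ρ+1)/(ρ+1) ≤ ∑ i ∈ Finset.range n, ((i:ℝ)+1)^ρ := by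
      have h2 := hmono.integral_le_sum
      rw [hint] at h2
      refine h2.trans_eq ?_
      push_cast
      refine Finset.sum_congr rfl fun i _ => ?_
      rw [zero_add]
    have h6 : ∑ i ∈ Finset.range n, ((i:ℝ)+1)^ρ
        = ∑ i ∈ Finset.range n, ((i:ℕ):ℝ)^ρ + (n:ℝ)^ρ := by
      have h5 := Finset.sum_range_succ' (fun i : ℕ => ((i:ℕ):ℝ) ^ ρ) n
      rw [Finset.sum_range_succ] at h5
      push_cast at h5
      rw [Real.zero_rpow hρ.ne'] at h5
      linarith
    have hlower : (n:ℝ) ^ (ρ + 1) / (ρ + 1) - (n:ℝ) ^ ρ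
        ≤ ∑ i ∈ Finset.range n, ((i:ℕ):ℝ) ^ ρ := by
      rw [h6] at h2'; linarith
    have hsum : ∑ j ∈ Finset.range n, ((j : ℝ) / n) ^ ρ
        = (∑ j ∈ Finset.range n, ((j:ℕ):ℝ) ^ ρ) / (n:ℝ) ^ ρ := by
      rw [Finset.sum_div]
      refine Finset.sum_congr rfl fun j _ => ?_
      rw [Real.div_rpow (Nat.cast_nonneg j) hN.le]
    have hpow : (n:ℝ) ^ (ρ + 1) = (n:ℝ) ^ ρ * n := by
      rw [Real.rpow_add hN, Real.rpow_one]
    have hnρ : (0:ℝ) < (n:ℝ) ^ ρ := Real.rpow_pos_of_pos hN ρ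
    have e0 : (1:ℝ)/n * ((∑ j ∈ Finset.range n, ((j:ℕ):ℝ) ^ ρ) / (n:ℝ)^ρ)
        = (∑ j ∈ Finset.range n, ((j:ℕ):ℝ) ^ ρ) / ((n:ℝ)^ρ * n) := by
      rw [div_mul_div_comm, one_mul, mul_comm]
    constructor
    · rw [hsum, e0, le_div_iff₀ (by positivity)]
      have e1 : (1/(1+ρ) - 1/(n:ℝ)) * ((n:ℝ)^ρ * n) = (n:ℝ)^(ρ+1)/(ρ+1) - (n:ℝ)^ρ := by
        rw [hpow]; field_simp; ring
      calc (1/(1+ρ) - 1/(n:ℝ)) * ((n:ℝ)^ρ * n)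
          = (n:ℝ)^(ρ+1)/(ρ+1) - (n:ℝ)^ρ := e1
        _ ≤ _ := hlower
    · rw [hsum, e0, div_le_div_iff₀ (by positivity) h1ρ]
      have hup2 : (∑ i ∈ Finset.range n, ((i:ℕ):ℝ) ^ ρ) * (ρ + 1) ≤ (n:ℝ)^ρ * n := by
        rw [← hpow]; exact (le_div_iff₀ hρ1).mp hupper
      calc (∑ i ∈ Finset.range n, ((i:ℕ):ℝ) ^ ρ) * (1 + ρ)
          = (∑ i ∈ Finset.range n, ((i:ℕ):ℝ) ^ ρ) * (ρ + 1) := by ring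
        _ ≤ (n:ℝ)^ρ * n := hup2
        _ = 1 * ((n:ℝ)^ρ * n) := by ring
  have hlowlim : Tendsto (fun n : ℕ => 1 / (1 + ρ) - 1 / (n : ℝ)) atTop (𝓝 (1 / (1 + ρ))) := by
    have := tendsto_one_div_atTop_nhds_zero_nat (𝕜 := ℝ)
    simpa using (tendsto_const_nhds (x := 1 / (1 + ρ))).sub this
  refine tendsto_of_tendsto_of_tendsto_of_le_of_le' hlowlim tendsto_const_nhds ?_ ?_
  · filter_upwards [eventually_ge_atTop 1] with n hn using (key n hn).1
  · filter_upwards [eventually_ge_atTop 1] with n hn using (key n hn).2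

lemma sum_range_succ_eq_add_Icc (g : ℕ → ℝ) (m : ℕ) :
    ∑ i ∈ Finset.range (m+1), g i = g 0 + ∑ i ∈ Finset.Icc 1 m, g i := by
  rw [Finset.range_eq_Ico, Finset.sum_eq_sum_Ico_succ_bot (Nat.succ_pos m)]
  simp [Finset.Ico_add_one_right_eq_Icc]

lemma det_main {ρ : ℝ} (hρ : 0 < ρ)
    (hriemann : Tendsto (fun n : ℕ => (1 / (n : ℝ)) * ∑ j ∈ Finset.range n, ((j : ℝ) / n) ^ ρ)
      atTop (𝓝 (1 / (1 + ρ))))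
    (a : ℕ → ℝ) (hpos : ∀ n, 1 ≤ n → 0 < a n)
    (ha : Tendsto (fun n : ℕ => a n / n) atTop (𝓝 1)) :
    Tendsto (fun m : ℕ => (1 / (m:ℝ)) * ∑ i ∈ Finset.Icc 1 m, (a (i+1) / a (m+1)) ^ ρ)
      atTop (𝓝 (1 / (1 + ρ))) := by
  set c : ℕ → ℝ := fun n => a (n+1) / ((n:ℝ)+1) with hc_def
  have hc_pos : ∀ n, 0 < c n := fun n =>
    div_pos (hpos (n+1) (Nat.le_add_left 1 n)) (by positivity)
  have hc : Tendsto c atTop (𝓝 1) := by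
    have := ha.comp (tendsto_add_atTop_nat 1)
    simp only [Function.comp_def] at this
    apply this.congr
    intro n
    simp [hc_def]
  set d : ℕ → ℝ := fun n => (c n) ^ ρ with hd_def
  have hd_pos : ∀ n, 0 < d n := fun n => Real.rpow_pos_of_pos (hc_pos n) ρ
  have hd : Tendsto d atTop (𝓝 1) := by
    have := hc.rpow_const (Or.inl one_ne_zero) (p := ρ)
    simpa using this
  set T : ℕ → ℝ := fun m =>
    (1/(m:ℝ)) * ∑ i ∈ Finset.Icc 1 m, (((i:ℝ)+1)/((m:ℝ)+1)) ^ ρ with hT_def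
  set S : ℕ → ℝ := fun m =>
    (1/(m:ℝ)) * ∑ i ∈ Finset.Icc 1 m, (a (i+1) / a (m+1)) ^ ρ with hS_def
  have h1 : Tendsto (fun m : ℕ => ((m:ℝ)+1)/m) atTop (𝓝 1) := by
    have h0 : Tendsto (fun m : ℕ => 1 + 1/(m:ℝ)) atTop (𝓝 1) := by
      simpa using (tendsto_const_nhds (x := (1:ℝ))).add tendsto_one_div_atTop_nhds_zero_nat
    apply h0.congr'
    filter_upwards [eventually_ge_atTop 1] with m hm
    have hm0 : ((m:ℝ)) ≠ 0 := by
      have : (0:ℝ) < m := by exact_mod_cast hm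
      exact this.ne'
    field_simp
  -- convergence of T
  have hT : Tendsto T atTop (𝓝 (1 / (1 + ρ))) := by
    have hTU : ∀ m : ℕ, 1 ≤ m →
        T m = (((m:ℝ)+1)/m) *
            ((1 / ((m+1:ℕ) : ℝ)) * ∑ j ∈ Finset.range (m+1), ((j : ℝ) / ((m+1:ℕ):ℝ)) ^ ρ)
          + (1/(m:ℝ)) * (1 - ((1:ℝ)/((m:ℝ)+1)) ^ ρ) := by
      intro m hm
      have hm0 : ((m:ℝ)) ≠ 0 := by
        have : (0:ℝ) < m := by exact_mod_cast hm
        exact this.ne'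
      have hM1 : ((m:ℝ)+1) ≠ 0 := by positivity
      have hkey : ∑ i ∈ Finset.Icc 1 m, (((i:ℝ)+1)/((m:ℝ)+1)) ^ ρ
          = ∑ j ∈ Finset.range (m+1), ((j:ℝ)/((m:ℝ)+1)) ^ ρ + 1 - ((1:ℝ)/((m:ℝ)+1)) ^ ρ := by
        set G : ℕ → ℝ := fun j => ((j:ℝ)/((m:ℝ)+1)) ^ ρ with hG
        have e1 := sum_range_succ_eq_add_Icc (fun i => G (i+1)) m
        have e2 := Finset.sum_range_succ' G (m+1)
        have e3 := Finset.sum_range_succ G (m+1)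
        have hG0 : G 0 = 0 := by simp [hG, Real.zero_rpow hρ.ne']
        have hGm : G (m+1) = 1 := by
          simp only [hG]
          push_cast
          rw [div_self hM1, Real.one_rpow]
        have hG1 : G 1 = ((1:ℝ)/((m:ℝ)+1)) ^ ρ := by norm_num [hG]
        have hcongr : ∑ i ∈ Finset.Icc 1 m, (((i:ℝ)+1)/((m:ℝ)+1)) ^ ρ
            = ∑ i ∈ Finset.Icc 1 m, G (i+1) := by
          refine Finset.sum_congr rfl fun i _ => ?_
          simp only [hG]
          push_cast
          ring_nf
        rw [hcongr]
        rw [e3, hG0, hGm] at e2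
        rw [hG1] at e1
        linarith
      simp only [hT_def]
      rw [hkey]
      push_cast
      field_simp
      ring
    have h2 : Tendsto (fun m : ℕ =>
        (1 / ((m+1:ℕ) : ℝ)) * ∑ j ∈ Finset.range (m+1), ((j : ℝ) / ((m+1:ℕ):ℝ)) ^ ρ)
        atTop (𝓝 (1/(1+ρ))) := hriemann.comp (tendsto_add_atTop_nat 1)
    have h3 : Tendsto (fun m : ℕ => (1/(m:ℝ)) * (1 - ((1:ℝ)/((m:ℝ)+1))^ρ)) atTop (𝓝 0) := by
      have ha1 : Tendsto (fun m : ℕ => ((1:ℝ)/((m:ℝ)+1))^ρ) atTop (𝓝 0) := by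
        have h0 : Tendsto (fun m : ℕ => (1:ℝ)/((m:ℝ)+1)) atTop (𝓝 0) :=
          tendsto_one_div_add_atTop_nhds_zero_nat
        have := h0.rpow_const (Or.inr hρ.le)
        simpa [Real.zero_rpow hρ.ne'] using this
      have := tendsto_one_div_atTop_nhds_zero_nat.mul
        ((tendsto_const_nhds (x := (1:ℝ))).sub ha1)
      simpa using this
    have h4 := (h1.mul h2).add h3
    rw [one_mul, add_zero] at h4
    apply h4.congr'
    filter_upwards [eventually_ge_atTop 1] with m hm
    exact (hTU m hm).symm
  -- pointwise identity for the summands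
  have hterm : ∀ m i : ℕ, (a (i+1) / a (m+1)) ^ ρ
      = (d i / d m) * (((i:ℝ)+1)/((m:ℝ)+1)) ^ ρ := by
    intro m i
    have hi : (0:ℝ) < (i:ℝ)+1 := by positivity
    have hm : (0:ℝ) < (m:ℝ)+1 := by positivity
    have hai : 0 < a (i+1) := hpos _ (Nat.le_add_left 1 i)
    have ham : 0 < a (m+1) := hpos _ (Nat.le_add_left 1 m)
    have h1' : a (i+1) / a (m+1) = (c i / c m) * (((i:ℝ)+1)/((m:ℝ)+1)) := by
      simp only [hc_def]
      field_simp
    rw [h1', Real.mul_rpow (by positivity) (by positivity),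
      Real.div_rpow (hc_pos i).le (hc_pos m).le]
  -- the error bound
  have hbound : ∀ m : ℕ, 1 ≤ m → |S m - T m|
      ≤ (1/(d m)) * ((1/(m:ℝ)) * ∑ i ∈ Finset.Icc 1 m, |d i - 1| + |d m - 1|) := by
    intro m hm
    have hm0 : (0:ℝ) < m := by exact_mod_cast hm
    have hdm := hd_pos m
    have hdiff : S m - T m = (1/(m:ℝ)) *
        ∑ i ∈ Finset.Icc 1 m, ((d i / d m) - 1) * (((i:ℝ)+1)/((m:ℝ)+1))^ρ := by
      simp only [hS_def, hT_def]
      rw [← mul_sub, ← Finset.sum_sub_distrib]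
      congr 1
      refine Finset.sum_congr rfl fun i hi => ?_
      rw [hterm m i]
      ring
    have habs_term : ∀ i ∈ Finset.Icc 1 m,
        |((d i / d m) - 1) * (((i:ℝ)+1)/((m:ℝ)+1))^ρ|
          ≤ (|d i - 1| + |d m - 1|)/(d m) := by
      intro i hi
      have him : i ≤ m := (Finset.mem_Icc.mp hi).2
      have hq0 : (0:ℝ) ≤ (((i:ℝ)+1)/((m:ℝ)+1))^ρ := by positivity
      have hq1 : (((i:ℝ)+1)/((m:ℝ)+1))^ρ ≤ 1 := by
        apply Real.rpow_le_one (by positivity) _ hρ.le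
        rw [div_le_one (by positivity)]
        have : (i:ℝ) ≤ m := by exact_mod_cast him
        linarith
      have e1 : |((d i / d m) - 1) * (((i:ℝ)+1)/((m:ℝ)+1))^ρ|
          = |(d i / d m) - 1| * (((i:ℝ)+1)/((m:ℝ)+1))^ρ := by
        rw [abs_mul, abs_of_nonneg hq0]
      rw [e1]
      calc |(d i / d m) - 1| * (((i:ℝ)+1)/((m:ℝ)+1))^ρ
          ≤ |(d i / d m) - 1| * 1 := by
            exact mul_le_mul_of_nonneg_left hq1 (abs_nonneg _)
        _ = |(d i - d m)|/(d m) := by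
            rw [mul_one]
            rw [show d i / d m - 1 = (d i - d m)/d m by field_simp]
            rw [abs_div, abs_of_pos hdm]
        _ ≤ (|d i - 1| + |d m - 1|)/(d m) := by
            gcongr
            calc |d i - d m| = |(d i - 1) - (d m - 1)| := by congr 1; ring
              _ ≤ |d i - 1| + |d m - 1| := abs_sub _ _
    have hcard : ((Finset.Icc 1 m).card : ℝ) = m := by
      simp [Nat.card_Icc]
    rw [hdiff, abs_mul, abs_of_nonneg (by positivity : (0:ℝ) ≤ 1/(m:ℝ))]
    calc (1/(m:ℝ)) * |∑ i ∈ Finset.Icc 1 m, ((d i / d m) - 1) * (((i:ℝ)+1)/((m:ℝ)+1))^ρ|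
        ≤ (1/(m:ℝ)) * ∑ i ∈ Finset.Icc 1 m,
            |((d i / d m) - 1) * (((i:ℝ)+1)/((m:ℝ)+1))^ρ| := by
          exact mul_le_mul_of_nonneg_left (Finset.abs_sum_le_sum_abs _ _) (by positivity)
      _ ≤ (1/(m:ℝ)) * ∑ i ∈ Finset.Icc 1 m, (|d i - 1| + |d m - 1|)/(d m) := by
          exact mul_le_mul_of_nonneg_left (Finset.sum_le_sum habs_term) (by positivity)
      _ = (1/(d m)) * ((1/(m:ℝ)) * ∑ i ∈ Finset.Icc 1 m, |d i - 1| + |d m - 1|) := by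
          rw [← Finset.sum_div, Finset.sum_add_distrib, Finset.sum_const, nsmul_eq_mul, hcard]
          field_simp
  -- convergence of the error bound to zero
  have habs : Tendsto (fun i => |d i - 1|) atTop (𝓝 0) := by
    have := (hd.sub (tendsto_const_nhds (x := (1:ℝ)))).abs
    simpa using this
  have hces := habs.cesaro
  have hA : Tendsto (fun m : ℕ => (1/(m:ℝ)) * ∑ i ∈ Finset.Icc 1 m, |d i - 1|)
      atTop (𝓝 0) := by
    have hshift := hces.comp (tendsto_add_atTop_nat 1)
    have h2 := h1.mul hshift
    have h3 := tendsto_one_div_atTop_nhds_zero_nat.const_mul (|d 0 - 1|)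
    have h4 := h2.sub h3
    rw [one_mul, mul_zero, sub_zero] at h4
    apply h4.congr'
    filter_upwards [eventually_ge_atTop 1] with m hm
    have hm0 : ((m:ℝ)) ≠ 0 := by
      have : (0:ℝ) < m := by exact_mod_cast hm
      exact this.ne'
    have hsplit := sum_range_succ_eq_add_Icc (fun i => |d i - 1|) m
    simp only [Function.comp] at hsplit ⊢
    rw [hsplit]
    push_cast
    field_simp
    ring
  have hinv : Tendsto (fun m => 1/(d m)) atTop (𝓝 1) := by
    have := hd.inv₀ one_ne_zero
    simpa [one_div] using this
  have hDtend := hinv.mul (hA.add habs)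
  rw [add_zero, mul_zero] at hDtend
  have hST : Tendsto (fun m => S m - T m) atTop (𝓝 0) := by
    apply squeeze_zero_norm' _ hDtend
    filter_upwards [eventually_ge_atTop 1] with m hm
    rw [Real.norm_eq_abs]
    exact hbound m hm
  have hfin := hT.add hST
  rw [add_zero] at hfin
  apply hfin.congr
  intro m
  ring

lemma expMeasure_one_eq : expMeasure 1 = volume.withDensity (exponentialPDF 1) := rfl

lemma measurable_expPDF : Measurable (exponentialPDF 1) :=
  (measurable_exponentialPDFReal 1).ennreal_ofReal

lemma exp_lintegral_id :
    ∫⁻ x, exponentialPDF 1 x * ENNReal.ofReal x = 1 := by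
  have hsplit : ∫⁻ x, exponentialPDF 1 x * ENNReal.ofReal x
      = ∫⁻ x in Ioi (0:ℝ), ENNReal.ofReal (Real.exp (-x) * x) := by
    rw [← lintegral_add_compl (fun x => exponentialPDF 1 x * ENNReal.ofReal x)
      (measurableSet_Ioi (a := (0:ℝ)))]
    have h1 : ∫⁻ x in (Ioi (0:ℝ))ᶜ, exponentialPDF 1 x * ENNReal.ofReal x = 0 := by
      rw [compl_Ioi]
      rw [setLIntegral_congr_fun measurableSet_Iic
        (fun x (hx : x ≤ 0) => ?_), lintegral_zero]
      rcases lt_or_eq_of_le hx with h | h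
      · rw [exponentialPDF_of_neg h, zero_mul]
      · rw [h, ENNReal.ofReal_zero, mul_zero]
    have h2 : ∫⁻ x in Ioi (0:ℝ), exponentialPDF 1 x * ENNReal.ofReal x
        = ∫⁻ x in Ioi (0:ℝ), ENNReal.ofReal (Real.exp (-x) * x) := by
      refine setLIntegral_congr_fun measurableSet_Ioi (fun x (hx : 0 < x) => ?_)
      rw [exponentialPDF_of_nonneg hx.le, one_mul,
        ← ENNReal.ofReal_mul (Real.exp_pos _).le]
      norm_num
    rw [h1, h2, add_zero]
  rw [hsplit]
  have hGint : IntegrableOn (fun x : ℝ => Real.exp (-x) * x) (Ioi (0:ℝ)) := by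
    have := Real.GammaIntegral_convergent (s := 2) (by norm_num)
    have h21 : ((2:ℝ) - 1) = 1 := by norm_num
    simpa [h21, Real.rpow_one] using this
  rw [← ofReal_integral_eq_lintegral_ofReal hGint ?hnn]
  case hnn =>
    rw [EventuallyLE, ae_restrict_iff' measurableSet_Ioi]
    exact ae_of_all _ fun x (hx : 0 < x) => by positivity
  have hG : ∫ x in Ioi (0:ℝ), Real.exp (-x) * x = Real.Gamma 2 := by
    rw [Real.Gamma_eq_integral (by norm_num)]
    norm_num
  have hG2 : Real.Gamma 2 = 1 := by
    have : (2:ℝ) = 1 + 1 := by norm_num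
    rw [this, Real.Gamma_add_one one_ne_zero, Real.Gamma_one, one_mul]
  rw [hG, hG2, ENNReal.ofReal_one]

lemma exp_nonneg_ae : ∀ᵐ x ∂(expMeasure 1), 0 ≤ x := by
  rw [ae_iff]
  have hset : {x : ℝ | ¬ (0:ℝ) ≤ x} = Set.Iio 0 := by
    ext x; simp [not_le]
  rw [hset, expMeasure_one_eq, withDensity_apply _ measurableSet_Iio]
  exact lintegral_exponentialPDF_of_nonpos le_rfl

lemma exp_integrable : Integrable id (expMeasure 1) := by
  constructor
  · exact measurable_id.aestronglyMeasurable
  · rw [HasFiniteIntegral, expMeasure_one_eq,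
      lintegral_withDensity_eq_lintegral_mul volume measurable_expPDF
        measurable_id.enorm]
    simp_rw [Pi.mul_apply]
    have : ∫⁻ x : ℝ, exponentialPDF 1 x * ‖x‖ₑ
        = ∫⁻ x, exponentialPDF 1 x * ENNReal.ofReal x := by
      refine lintegral_congr fun x => ?_
      rcases le_or_gt 0 x with hx | hx
      · simp [Real.enorm_eq_ofReal hx]
      · simp [exponentialPDF_of_neg hx]
    simp only [id_eq]
    rw [this, exp_lintegral_id]
    norm_num
  
lemma exp_mean : ∫ x, x ∂(expMeasure 1) = 1 := by
  rw [integral_eq_lintegral_of_nonneg_ae exp_nonneg_ae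
    (measurable_id.aestronglyMeasurable (f := fun x : ℝ => x))]
  have : ∫⁻ x, ENNReal.ofReal x ∂(expMeasure 1)
      = ∫⁻ x, exponentialPDF 1 x * ENNReal.ofReal x := by
    rw [expMeasure_one_eq,
      lintegral_withDensity_eq_lintegral_mul volume measurable_expPDF
        ENNReal.measurable_ofReal]
    simp_rw [Pi.mul_apply]
  rw [this, exp_lintegral_id, ENNReal.toReal_one]

lemma exp_pos_measure_Iic : expMeasure 1 (Set.Iic 0) = 0 := by
  have h1 : expMeasure 1 (Set.Iio 0) = 0 := by
    rw [expMeasure_one_eq, withDensity_apply _ measurableSet_Iio]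
    exact lintegral_exponentialPDF_of_nonpos le_rfl
  have h2 : expMeasure 1 ({0} : Set ℝ) = 0 := by
    rw [expMeasure_one_eq]
    exact withDensity_absolutelyContinuous volume _ (measure_singleton 0)
  have : (Set.Iic (0:ℝ)) = Set.Iio 0 ∪ {0} := by
    ext x; simp [le_iff_lt_or_eq]
  rw [this]
  exact measure_union_null h1 h2

/-- For every `ρ > 0`,
`(1/m) Σ_{i=1}^m (Γ_{i+1}/Γ_{m+1})^ρ → 1/(1+ρ)` almost surely as `m → ∞`. -/
theorem gammaSum_power_mean_as_convergence
    {Ω : Type*} [MeasurableSpace Ω] (P : Measure Ω) [IsProbabilityMeasure P]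
    (ρ : ℝ) (hρ : 0 < ρ) (E : ℕ → Ω → ℝ) (hE : IIDStdExp P E) :
    ∀ᵐ ω ∂P,
      Tendsto
        (fun m : ℕ => (1 / (m : ℝ)) *
          ∑ i ∈ Finset.Icc 1 m, (gammaSum E (i + 1) ω / gammaSum E (m + 1) ω) ^ ρ)
        atTop (𝓝 (1 / (1 + ρ))) := by
  obtain ⟨hindep, hmm⟩ := hE
  have hint : Integrable (E 0) P := by
    have h0 : Integrable id (Measure.map (E 0) P) := by
      rw [(hmm 0).2]; exact exp_integrable
    have := (integrable_map_measure measurable_id.aestronglyMeasurable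
      (hmm 0).1.aemeasurable).mp h0
    simpa [Function.id_comp] using this
  have hmean : P[E 0] = 1 := by
    have : ∫ ω, E 0 ω ∂P = ∫ x, id x ∂(Measure.map (E 0) P) := by
      rw [integral_map (hmm 0).1.aemeasurable measurable_id.aestronglyMeasurable]
      simp
    rw [this, (hmm 0).2]
    simpa using exp_mean
  have hident : ∀ i, IdentDistrib (E i) (E 0) P P := fun i =>
    ⟨(hmm i).1.aemeasurable, (hmm 0).1.aemeasurable, by rw [(hmm i).2, (hmm 0).2]⟩
  have hpairwise : Pairwise (Function.onFun (IndepFun · · P) E) := fun i j hij => hindep.indepFun hij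
  have hslln := strong_law_ae_real E hint hpairwise hident
  rw [hmean] at hslln
  have hpos_ae : ∀ᵐ ω ∂P, ∀ i, 0 < E i ω := by
    rw [ae_all_iff]
    intro i
    rw [ae_iff]
    have hset : {ω | ¬ 0 < E i ω} = E i ⁻¹' (Set.Iic 0) := by
      ext ω; simp [not_lt]
    rw [hset, ← Measure.map_apply (hmm i).1 measurableSet_Iic, (hmm i).2]
    exact exp_pos_measure_Iic
  filter_upwards [hslln, hpos_ae] with ω hω hpω
  have hpos : ∀ n, 1 ≤ n → 0 < gammaSum E n ω := by
    intro n hn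
    apply Finset.sum_pos (fun i _ => hpω i)
    exact Finset.nonempty_range_iff.mpr (by omega)
  have ha : Tendsto (fun n : ℕ => gammaSum E n ω / n) atTop (𝓝 1) := by
    simpa [gammaSum] using hω
  exact det_main hρ (riemann_rpow hρ) (fun n => gammaSum E n ω) hpos ha
end
end
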